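/- F-measure step characterization: In the classification setting, suppose L(k) ⊊ L(k+1). Then F1(k+1) < F1(k) if and only if the marginal precision at level k is smaller than half the current F-measure, i.e., (TP(k+1) − TP(k))/(|L(k+1)| − |L(k)|) < F1(k)/2. Likewise, F1(k+1) > F1(k) if and only if (TP(k+1) − TP(k))/(|L(k+1)| − |L(k)|) > F1(k)/2. -/
import Mathlib


/-- True positives after exploring the first `k` skylines. -/
noncomputable def truePos {α : Type*} [DecidableEq α] (M : Finset α) (L : ℕ → Finset α) (k : ℕ) : ℝ :=
  ((L k ∩ M).card : ℝ)

/-- F-measure after exploring the first `k` skylines: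
`F1(k) = 2·TP(k) / (|L(k)| + |M|)`. -/
noncomputable def fMeasure {α : Type*} [DecidableEq α] (M : Finset α) (L : ℕ → Finset α) (k : ℕ) : ℝ :=
  2 * truePos M L k / (((L k).card : ℝ) + (M.card : ℝ))

/-- Marginal precision at level `k`:
`q(k) = (TP(k+1) − TP(k)) / (|L(k+1)| − |L(k)|)`. -/
noncomputable def margPrec {α : Type*} [DecidableEq α] (M : Finset α) (L : ℕ → Finset α) (k : ℕ) : ℝ :=
  (truePos M L (k + 1) - truePos M L k) / (((L (k + 1)).card : ℝ) - ((L k).card : ℝ))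

/-- F-measure step characterization: if `L k ⊊ L (k+1)`, then `F1(k+1) < F1(k)` iff the
marginal precision at level `k` is smaller than `F1(k)/2`, and `F1(k+1) > F1(k)` iff it is
larger than `F1(k)/2`. -/
theorem fMeasure_step_characterization {α : Type*} [DecidableEq α]
    (P M : Finset α) (hMP : M ⊆ P) (hM : M.Nonempty)
    (L : ℕ → Finset α) (hLP : ∀ k, L k ⊆ P) (hmono : ∀ k, L k ⊆ L (k + 1))
    (k : ℕ) (hssub : L k ⊂ L (k + 1)) :
    (fMeasure M L (k + 1) < fMeasure M L k ↔ margPrec M L k < fMeasure M L k / 2) ∧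
    (fMeasure M L k < fMeasure M L (k + 1) ↔ fMeasure M L k / 2 < margPrec M L k) := by
  have hmn : (L k).card < (L (k + 1)).card := Finset.card_lt_card hssub
  set a := truePos M L k with ha
  set b := truePos M L (k + 1) with hb
  set n := ((L k).card : ℝ) with hn
  set m := ((L (k + 1)).card : ℝ) with hm
  set s := ((M.card : ℕ) : ℝ) with hs
  have hs0 : 0 < s := by simp only [hs]; exact_mod_cast Finset.card_pos.mpr hM
  have hnm : n < m := by simp only [hn, hm]; exact_mod_cast hmn
  have hn0 : (0:ℝ) ≤ n := Nat.cast_nonneg _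
  have h1 : 0 < n + s := by linarith
  have h2 : 0 < m + s := by linarith
  have h3 : 0 < m - n := by linarith
  have ha0 : (0:ℝ) ≤ a := Nat.cast_nonneg _
  unfold fMeasure margPrec
  rw [← ha, ← hb, ← hn, ← hm, ← hs]
  have h4 : (0:ℝ) < (n+s)*2 := by linarith
  rw [div_div, div_lt_div_iff₀ h2 h1, div_lt_div_iff₀ h3 h4,
    div_lt_div_iff₀ h1 h2, div_lt_div_iff₀ h4 h3]
  constructor <;> constructor <;> intro h <;> nlinarith
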